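/- For every T with 0 < T < 3/2 there exists a function u : ℝ × ℝ → ℝ of class C^∞ that is a classical solution of the one-dimensional wave equation on [0,T]×[−1,1] with Dirichlet boundary conditions, whose initial data (u(0,·), ∂ₜu(0,·)) do not both vanish identically on [−1,1], and such that u(t,x) = 0 for all t ∈ [0,T] and all x ∈ ω = (−1,−3/4) ∪ (3/4,1). In particular, for 0 < T < 3/2 there is no constant C > 0 such that ∫_{−1}^{1} ( (∂ₓu(0,x))² + (∂ₜu(0,x))² ) dx ≤ C ∫_0^T ∫_ω (∂ₜu(t,x))² dx dt holds for all classical solutions. -/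

import Mathlib

open MeasureTheory

/-- Partial derivative in time of a function of (time, space). -/
noncomputable def pdt (u : ℝ → ℝ → ℝ) : ℝ → ℝ → ℝ := fun t x => deriv (fun s => u s x) t

/-- Partial derivative in space of a function of (time, space). -/
noncomputable def pdx (u : ℝ → ℝ → ℝ) : ℝ → ℝ → ℝ := fun t x => deriv (fun y => u t y) x

lemma aux_integral_pos {g : ℝ → ℝ} (hg : Continuous g) (hnn : ∀ x, 0 ≤ g x)
    {a b x₀ : ℝ} (hx₀ : x₀ ∈ Set.Ioo a b) (hpos : g x₀ ≠ 0) :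
    0 < ∫ x in Set.Ioo a b, g x := by
  have hi : IntegrableOn g (Set.Ioo a b) :=
    (hg.integrableOn_Icc).mono_set Set.Ioo_subset_Icc_self
  rw [setIntegral_pos_iff_support_of_nonneg_ae (Filter.Eventually.of_forall hnn) hi]
  have hopen : IsOpen (Function.support g ∩ Set.Ioo a b) := by
    refine IsOpen.inter ?_ isOpen_Ioo
    rw [Function.support_eq_preimage]
    exact isOpen_compl_singleton.preimage hg
  exact hopen.measure_pos volume ⟨x₀, hpos, hx₀⟩

lemma aux_le_top (n : ℕ) : (n : WithTop ℕ∞) ≤ ((⊤ : ℕ∞) : WithTop ℕ∞) := by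
  rw [show (n : WithTop ℕ∞) = ((n : ℕ∞) : WithTop ℕ∞) from rfl]
  exact WithTop.coe_le_coe.2 le_top

theorem no_observability_below_threshold (T : ℝ) (hT0 : 0 < T) (hT : T < 3 / 2) :
    -- there is an invisible smooth solution with nontrivial initial data
    (∃ u : ℝ → ℝ → ℝ,
      ContDiff ℝ (⊤ : ℕ∞) (Function.uncurry u) ∧
      (∀ t ∈ Set.Icc (0 : ℝ) T, ∀ x ∈ Set.Icc (-1 : ℝ) 1,
        pdt (pdt u) t x = pdx (pdx u) t x) ∧
      (∀ t ∈ Set.Icc (0 : ℝ) T, u t (-1) = 0 ∧ u t 1 = 0) ∧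
      ¬ (∀ x ∈ Set.Icc (-1 : ℝ) 1, u 0 x = 0 ∧ pdt u 0 x = 0) ∧
      (∀ t ∈ Set.Icc (0 : ℝ) T,
        ∀ x ∈ (Set.Ioo (-1 : ℝ) (-3 / 4) ∪ Set.Ioo (3 / 4 : ℝ) 1), u t x = 0)) ∧
    -- in particular, no observability constant exists for all classical solutions
    ¬ (∃ C : ℝ, 0 < C ∧
        ∀ u : ℝ → ℝ → ℝ,
          ContDiffOn ℝ 2 (Function.uncurry u) (Set.Icc 0 T ×ˢ Set.Icc (-1 : ℝ) 1) →
          (∀ t ∈ Set.Icc (0 : ℝ) T, ∀ x ∈ Set.Icc (-1 : ℝ) 1,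
            pdt (pdt u) t x = pdx (pdx u) t x) →
          (∀ t ∈ Set.Icc (0 : ℝ) T, u t (-1) = 0 ∧ u t 1 = 0) →
          ∫ x in Set.Ioo (-1 : ℝ) 1, ((pdx u 0 x) ^ 2 + (pdt u 0 x) ^ 2) ≤
            C * ∫ t in Set.Ioo (0 : ℝ) T,
                  ∫ x in (Set.Ioo (-1 : ℝ) (-3 / 4) ∪ Set.Ioo (3 / 4 : ℝ) 1),
                    (pdt u t x) ^ 2) := by
  -- setup
  set δ : ℝ := (3 / 2 - T) / 2 with hδdef
  have hδ0 : 0 < δ := by simp only [hδdef]; linarith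
  have hδlt : δ < 3 / 4 := by simp only [hδdef]; linarith
  set c : ℝ := -3 / 4 + δ / 2 with hcdef
  set f : ContDiffBump c := ⟨δ / 4, δ / 2, by linarith, by linarith⟩ with hfdef
  set u : ℝ → ℝ → ℝ := fun t x => f (x - t) with hudef
  -- support facts
  have htsupp : tsupport f ⊆ Set.Icc (-3 / 4 : ℝ) (-3 / 4 + δ) := by
    rw [f.tsupport_eq, Real.closedBall_eq_Icc]
    apply Set.Icc_subset_Icc <;> simp [hfdef, hcdef] <;> ring_nf <;> linarith
  have hfzero : ∀ y : ℝ, y ∉ Set.Icc (-3 / 4 : ℝ) (-3 / 4 + δ) → f y = 0 :=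
    fun y hy => image_eq_zero_of_notMem_tsupport (fun h => hy (htsupp h))
  have hdzero : ∀ y : ℝ, y ∉ Set.Icc (-3 / 4 : ℝ) (-3 / 4 + δ) → deriv f y = 0 := by
    intro y hy
    by_contra h
    exact hy (htsupp (support_deriv_subset h))
  -- derivative computations
  have hpdt : ∀ t x : ℝ, pdt u t x = -deriv f (x - t) := by
    intro t x
    exact deriv_comp_const_sub (f : ℝ → ℝ) x t
  have hpdx : ∀ t x : ℝ, pdx u t x = deriv f (x - t) := by
    intro t x
    exact deriv_comp_sub_const (f : ℝ → ℝ) t x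
  have hpdtt : ∀ t x : ℝ, pdt (pdt u) t x = deriv (deriv f) (x - t) := by
    intro t x
    have h1 : (fun s => pdt u s x) = fun s => -(deriv f (x - s)) :=
      funext fun s => hpdt s x
    show deriv (fun s => pdt u s x) t = _
    rw [h1, deriv.fun_neg, deriv_comp_const_sub (deriv (f : ℝ → ℝ)) x t, neg_neg]
  have hpdxx : ∀ t x : ℝ, pdx (pdx u) t x = deriv (deriv f) (x - t) := by
    intro t x
    have h1 : (fun y => pdx u t y) = fun y => deriv f (y - t) :=
      funext fun y => hpdx t y
    show deriv (fun y => pdx u t y) x = _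
    rw [h1, deriv_comp_sub_const (deriv (f : ℝ → ℝ)) t x]
  -- vanishing on the observation region
  have hω : ∀ t ∈ Set.Icc (0 : ℝ) T,
      ∀ x ∈ (Set.Ioo (-1 : ℝ) (-3 / 4) ∪ Set.Ioo (3 / 4 : ℝ) 1),
        (x - t) ∉ Set.Icc (-3 / 4 : ℝ) (-3 / 4 + δ) := by
    rintro t ⟨ht0, htT⟩ x (⟨hx1, hx2⟩ | ⟨hx1, hx2⟩) ⟨h1, h2⟩
    · linarith
    · have : (3 : ℝ) / 4 - T = -3 / 4 + 2 * δ := by simp [hδdef]; ring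
      linarith
  -- smoothness
  have hsmooth : ContDiff ℝ (⊤ : ℕ∞) (Function.uncurry u) := by
    have : Function.uncurry u = (f : ℝ → ℝ) ∘ (fun p : ℝ × ℝ => p.2 - p.1) :=
      rfl
    rw [this]
    exact f.contDiff.comp (contDiff_snd.sub contDiff_fst)
  have hwave : ∀ t ∈ Set.Icc (0 : ℝ) T, ∀ x ∈ Set.Icc (-1 : ℝ) 1,
      pdt (pdt u) t x = pdx (pdx u) t x := by
    intro t _ x _; rw [hpdtt, hpdxx]
  have hbc : ∀ t ∈ Set.Icc (0 : ℝ) T, u t (-1) = 0 ∧ u t 1 = 0 := by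
    rintro t ⟨ht0, htT⟩
    constructor
    · apply hfzero; rintro ⟨h1, h2⟩; linarith
    · apply hfzero; rintro ⟨h1, h2⟩
      have : (1 : ℝ) - t ≥ 1 - T := by linarith
      simp only [hδdef] at h2; linarith
  have hc1 : f c = 1 := f.one_of_mem_closedBall (by
    simp only [Metric.mem_closedBall, dist_self]; exact f.rIn_pos.le)
  have hnontriv : ¬ (∀ x ∈ Set.Icc (-1 : ℝ) 1, u 0 x = 0 ∧ pdt u 0 x = 0) := by
    intro h
    have hcmem : c ∈ Set.Icc (-1 : ℝ) 1 := by
      constructor <;> simp only [hcdef] <;> linarith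
    have := (h c hcmem).1
    have hu0 : u 0 c = f c := by simp [hudef]
    rw [hu0, hc1] at this
    norm_num at this
  have hzero : ∀ t ∈ Set.Icc (0 : ℝ) T,
      ∀ x ∈ (Set.Ioo (-1 : ℝ) (-3 / 4) ∪ Set.Ioo (3 / 4 : ℝ) 1), u t x = 0 :=
    fun t ht x hx => hfzero _ (hω t ht x hx)
  refine ⟨⟨u, hsmooth, hwave, hbc, hnontriv, hzero⟩, ?_⟩
  -- no observability constant
  rintro ⟨C, hC, hobs⟩
  have h2 : ContDiffOn ℝ 2 (Function.uncurry u)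
      (Set.Icc 0 T ×ˢ Set.Icc (-1 : ℝ) 1) := (hsmooth.of_le (by exact_mod_cast aux_le_top 2)).contDiffOn
  have hineq := hobs u h2 hwave hbc
  -- RHS is zero
  have hRHS : (∫ t in Set.Ioo (0 : ℝ) T,
      ∫ x in (Set.Ioo (-1 : ℝ) (-3 / 4) ∪ Set.Ioo (3 / 4 : ℝ) 1),
        (pdt u t x) ^ 2) = 0 := by
    rw [setIntegral_congr_fun measurableSet_Ioo
      (g := fun _ => (0 : ℝ)) ?_, integral_zero]
    intro t ht
    show (∫ x in (Set.Ioo (-1 : ℝ) (-3 / 4) ∪ Set.Ioo (3 / 4 : ℝ) 1), (pdt u t x) ^ 2) = 0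
    rw [setIntegral_congr_fun (measurableSet_Ioo.union measurableSet_Ioo)
      (g := fun _ => (0 : ℝ)) ?_, integral_zero]
    intro x hx
    have := hdzero _ (hω t (Set.Ioo_subset_Icc_self ht) x hx)
    simp [hpdt t x, this]
  -- LHS is positive
  have hderivcont : Continuous (deriv (f : ℝ → ℝ)) :=
    (f.contDiff (n := ⊤)).continuous_deriv (by exact_mod_cast aux_le_top 1)
  have hfa : (f : ℝ → ℝ) (-3 / 4) = 0 := f.zero_of_le_dist (by
    rw [Real.dist_eq]
    simp only [hcdef, hfdef]
    rw [abs_of_nonpos (by linarith)]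
    linarith)
  obtain ⟨x₀, hx₀mem, hx₀⟩ := exists_deriv_eq_slope (f : ℝ → ℝ)
    (show (-3 / 4 : ℝ) < c by simp only [hcdef]; linarith)
    ((f.contDiff (n := ⊤)).continuous.continuousOn)
    ((f.contDiff (n := ⊤)).differentiable (by simp)).differentiableOn
  have hslope : deriv (f : ℝ → ℝ) x₀ ≠ 0 := by
    rw [hx₀, hc1, hfa]
    have : c - (-3 / 4 : ℝ) = δ / 2 := by simp only [hcdef]; ring
    rw [this]
    positivity
  have hLHS : 0 < ∫ x in Set.Ioo (-1 : ℝ) 1, ((pdx u 0 x) ^ 2 + (pdt u 0 x) ^ 2) := by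
    have heq : ∀ x : ℝ, (pdx u 0 x) ^ 2 + (pdt u 0 x) ^ 2
        = 2 * (deriv (f : ℝ → ℝ) x) ^ 2 := by
      intro x
      rw [hpdx, hpdt]
      simp only [sub_zero]
      ring
    rw [show (fun x => (pdx u 0 x) ^ 2 + (pdt u 0 x) ^ 2)
        = fun x => 2 * (deriv (f : ℝ → ℝ) x) ^ 2 from funext heq]
    apply aux_integral_pos (by fun_prop) (fun x => by positivity)
      (x₀ := x₀) ?_ (by positivity)
    obtain ⟨h1, h2⟩ := hx₀mem
    constructor
    · linarith
    · simp only [hcdef] at h2; linarith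
  rw [hRHS, mul_zero] at hineq
  linarith
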